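/- If A is a separable unital C*-algebra and F is a strictly spectral family of representations of A, then F is exhaustive. -/

import Mathlib

set_option maxHeartbeats 1000000

set_option maxHeartbeats 1000000

noncomputable section

namespace SSIE

open scoped NNReal

/-! ### Generic helper lemmas -/

section Helpers

variable {A B : Type*} [CStarAlgebra A] [CStarAlgebra B]

lemma psi_cont (ψ : A →⋆ₐ[ℂ] B) : Continuous ψ :=
  AddMonoidHomClass.continuous_of_bound ψ 1 (fun a => by
    simpa using NonUnitalStarAlgHom.norm_apply_le ψ a)

lemma map_rsmul (ψ : A →⋆ₐ[ℂ] B) (r : ℝ) (x : A) : ψ (r • x) = r • ψ x := by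
  rw [← algebraMap_smul ℂ r x, map_smul, algebraMap_smul]

/-- Scaled square root witness: `(√ν)⁻¹ • e` squares to `ν⁻¹ • (star e * e)`. -/
lemma sqrt_smul_star_mul_self {ν : ℝ} (hν : 0 ≤ ν) (e : A) :
    star ((Real.sqrt ν)⁻¹ • e) * ((Real.sqrt ν)⁻¹ • e) = ν⁻¹ • (star e * e) := by
  rw [star_smul, star_trivial, smul_mul_smul_comm, ← mul_inv, Real.mul_self_sqrt hν]

/-- decomposition `max (t - r) 0 = (t - r) + (a square)` at the level of `cfc`. -/
lemma cfc_max_sub_decomp (x : A) (hx : IsSelfAdjoint x) (r : ℝ) :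
    ∃ s : A, cfc (fun t : ℝ => max (t - r) 0) x = (x - r • (1 : A)) + star s * s := by
  have hq_cont : Continuous (fun t : ℝ => max (r - t) 0) :=
    (continuous_const.sub continuous_id).max continuous_const
  have hsq_cont : Continuous (fun t : ℝ => Real.sqrt (max (r - t) 0)) :=
    Real.continuous_sqrt.comp hq_cont
  set s := cfc (fun t : ℝ => Real.sqrt (max (r - t) 0)) x with hs
  have hs_sa : IsSelfAdjoint s := cfc_predicate _ x
  refine ⟨s, ?_⟩
  have h1 : star s * s = cfc (fun t : ℝ => max (r - t) 0) x := by
    rw [hs_sa.star_eq, hs, ← cfc_mul _ _ x hsq_cont.continuousOn hsq_cont.continuousOn]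
    exact cfc_congr fun t _ => Real.mul_self_sqrt (le_max_right _ _)
  have key : (fun t : ℝ => max (t - r) 0) = fun t => (t - r) + max (r - t) 0 := by
    funext t; rcases le_total t r with h | h
    · rw [max_eq_right (by linarith), max_eq_left (by linarith)]; ring
    · rw [max_eq_left (by linarith), max_eq_right (by linarith)]; ring
  rw [key, cfc_add (a := x) (f := fun t : ℝ => t - r) (g := fun t : ℝ => max (r - t) 0)
    ((continuous_id.sub continuous_const).continuousOn) hq_cont.continuousOn, h1]
  congr 1
  rw [cfc_sub (fun t : ℝ => t) (fun _ => r) x continuous_id.continuousOn continuousOn_const,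
    cfc_id' ℝ x, cfc_const r x, Algebra.algebraMap_eq_smul_one]

end Helpers

section Hilbert

variable {H : Type*} [NormedAddCommGroup H] [InnerProductSpace ℂ H] [CompleteSpace H]

lemma inner_star_apply_self (T : H →L[ℂ] H) (η : H) :
    @inner ℂ _ _ ((star T * T) η) η = ((‖T η‖ ^ 2 : ℝ) : ℂ) := by
  rw [ContinuousLinearMap.mul_apply, ContinuousLinearMap.star_eq_adjoint,
    ContinuousLinearMap.adjoint_inner_left, inner_self_eq_norm_sq_to_K]
  norm_cast

lemma exists_unit_vec (S : H →L[ℂ] H) (hS : ‖S‖ = 1) {ε : ℝ} (hε : 0 < ε) (hε1 : ε < 1) :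
    ∃ η : H, ‖η‖ = 1 ∧ 1 - ε ≤ ‖S η‖ := by
  by_contra hcon
  push_neg at hcon
  have hb : ‖S‖ ≤ 1 - ε := by
    refine ContinuousLinearMap.opNorm_le_bound _ (by linarith) fun x => ?_
    rcases eq_or_ne x 0 with rfl | hx
    · simp
    · have hxn : (0 : ℝ) < ‖x‖ := norm_pos_iff.mpr hx
      have h1 : ‖((‖x‖⁻¹ : ℝ) • x : H)‖ = 1 := by
        rw [norm_smul, Real.norm_eq_abs, abs_of_nonneg (by positivity)]
        field_simp
      have h2 := (hcon _ h1).le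
      rw [ContinuousLinearMap.map_smul_of_tower, norm_smul, Real.norm_eq_abs, abs_of_nonneg (by positivity)] at h2
      rw [inv_mul_le_iff₀ hxn] at h2
      linarith [h2]
  rw [hS] at hb; linarith

end Hilbert


/-! ### The recursion step -/

section Step

variable {A : Type*} [CStarAlgebra A] {H : Type} [NormedAddCommGroup H]
  [InnerProductSpace ℂ H] [CompleteSpace H] {ι : Type*} {Hf : ι → Type}
  [∀ i, NormedAddCommGroup (Hf i)] [∀ i, InnerProductSpace ℂ (Hf i)]
  [∀ i, CompleteSpace (Hf i)]

lemma step_exists (F : ∀ i, A →⋆ₐ[ℂ] (Hf i →L[ℂ] Hf i)) (ρ : A →⋆ₐ[ℂ] (H →L[ℂ] H))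
    (hirr : ∀ K : Submodule ℂ H, IsClosed (K : Set H) →
      (∀ a : A, ∀ ξ ∈ K, ρ a ξ ∈ K) → K = ⊥ ∨ K = ⊤)
    (y : A) (hy : IsSelfAdjoint y) (hρy : ρ y ≠ 0) (w : A) (hw : ρ w ≠ 0) :
    ∃ c y' : A, IsSelfAdjoint y' ∧ ρ y' ≠ 0 ∧ ‖c‖ ≤ 1 ∧ c * y' = y' ∧
      (∀ u : A, u * y = y → u * c = c ∧ u * y' = y') ∧
      (∀ i, F i w = 0 → F i c = 0 ∧ F i y' = 0) ∧
      (∀ i, F i y = 0 → F i c = 0 ∧ F i y' = 0) := by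
  classical
  -- ### Find `d` of the form `x * w * v` with `ρ (y * d) ≠ 0`, using irreducibility.
  obtain ⟨d, hdw, ζ, hdζ⟩ : ∃ d : A, (∃ x v : A, d = x * w * v) ∧ ∃ ζ : H, ρ (y * d) ζ ≠ 0 := by
    by_contra hcon
    push_neg at hcon
    set S : Set H := {ξ | ∃ x v ζ, ρ (x * w * v) ζ = ξ} with hS
    set K := (Submodule.span ℂ S).topologicalClosure with hK
    have hKclosed : IsClosed (K : Set H) := Submodule.isClosed_topologicalClosure _
    have hKinv : ∀ a : A, ∀ ξ ∈ K, ρ a ξ ∈ K := by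
      intro a ξ hξ
      have hmapsto : Set.MapsTo (ρ a) (Submodule.span ℂ S : Set H)
          (Submodule.span ℂ S : Set H) := by
        intro μ hμ
        induction hμ using Submodule.span_induction with
        | mem μ hμ =>
            obtain ⟨x, v, ζ', rfl⟩ := hμ
            refine Submodule.subset_span ⟨a * x, v, ζ', ?_⟩
            rw [← ContinuousLinearMap.comp_apply, ← ContinuousLinearMap.mul_def, ← map_mul]
            simp only [mul_assoc]
        | zero => simpa using (Submodule.span ℂ S).zero_mem
        | add u v _ _ hu hv => simpa using (Submodule.span ℂ S).add_mem hu hv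
        | smul t u _ hu => simpa using (Submodule.span ℂ S).smul_mem t hu
      have := (hmapsto.closure (ρ a).continuous) hξ
      exact this
    rcases hirr K hKclosed hKinv with hbot | htop
    · obtain ⟨ζ₀, hζ₀⟩ : ∃ ζ₀, ρ w ζ₀ ≠ 0 := by
        by_contra h; push_neg at h; exact hw (ContinuousLinearMap.ext h)
      have hmem : ρ w ζ₀ ∈ K := by
        apply Submodule.le_topologicalClosure
        exact Submodule.subset_span ⟨1, 1, ζ₀, by simp⟩
      rw [hbot] at hmem
      exact hζ₀ (by simpa using hmem)
    · have hker : K ≤ (ρ y).ker := by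
        apply Submodule.topologicalClosure_minimal
        · rw [Submodule.span_le]
          rintro ξ ⟨x, v, ζ', rfl⟩
          have := hcon (x * w * v) ⟨x, v, rfl⟩ ζ'
          rw [map_mul] at this
          simpa [LinearMap.mem_ker] using this
        · exact ContinuousLinearMap.isClosed_ker (ρ y)
      rw [htop] at hker
      apply hρy
      ext ξ
      simpa using hker (Submodule.mem_top (x := ξ))
  -- ### Build the positive element `z'` with `‖ρ z'‖ = 1`.
  set e := star d * y with he
  have hstar_e : star e = y * d := by
    rw [he, star_mul, star_star, hy.star_eq]
  set z := star e * e with hz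
  have hz_sa : IsSelfAdjoint z := IsSelfAdjoint.star_mul_self e
  have hρyd : ρ (y * d) ≠ 0 := fun h => hdζ (by rw [h]; simp)
  have hρe : ρ e ≠ 0 := by
    intro h
    apply hρyd
    rw [← hstar_e, map_star, h, star_zero]
  have hρz : ρ z ≠ 0 := by
    rw [hz, map_mul, map_star]
    intro h
    exact hρe ((CStarRing.star_mul_self_eq_zero_iff _).mp h)
  set ν := ‖ρ z‖ with hν
  have hν0 : (0 : ℝ) < ν := norm_pos_iff.mpr hρz
  set z' := ν⁻¹ • z with hz'
  have hz'_sa : IsSelfAdjoint z' := IsSelfAdjoint.smul (star_trivial _) hz_sa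
  set sν := (Real.sqrt ν)⁻¹ • e with hsν
  have hsν_eq : star sν * sν = z' := by
    rw [hsν, sqrt_smul_star_mul_self hν0.le, hz', hz]
  have hspec : ∀ t ∈ spectrum ℝ z', 0 ≤ t := by
    rw [← hsν_eq]; exact spectrum_star_mul_self_nonneg
  -- ### The functions for the functional calculus.
  set ftil : ℝ → ℝ := fun t => min (3 / 2) (max t (2 / 3))⁻¹ with hftil_def
  have hmaxne : ∀ t : ℝ, max t (2 / 3) ≠ 0 := fun t =>
    ne_of_gt (lt_of_lt_of_le (by norm_num) (le_max_right _ _))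
  have hmaxpos : ∀ t : ℝ, (0 : ℝ) < max t (2 / 3) := fun t =>
    lt_of_lt_of_le (by norm_num) (le_max_right _ _)
  have hftil_cont : Continuous ftil :=
    continuous_const.min ((continuous_id.max continuous_const).inv₀ hmaxne)
  set fA : ℝ → ℝ := fun t => t * ftil t with hfA_def
  have hfA_cont : Continuous fA := continuous_id.mul hftil_cont
  set gA : ℝ → ℝ := fun t => max (t - 2 / 3) 0 with hgA_def
  have hgA_cont : Continuous gA := (continuous_id.sub continuous_const).max continuous_const
  set gtil : ℝ → ℝ := fun t => (max (t - 2 / 3) 0) * (max t (2 / 3))⁻¹ with hgtil_def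
  have hgtil_cont : Continuous gtil :=
    hgA_cont.mul ((continuous_id.max continuous_const).inv₀ hmaxne)
  -- value facts
  have hfA_one : ∀ t : ℝ, 2 / 3 < t → fA t = 1 := by
    intro t ht
    have ht0 : (0 : ℝ) < t := by linarith
    have h1 : max t (2 / 3) = t := max_eq_left (by linarith)
    have h2 : t⁻¹ ≤ 3 / 2 := by
      rw [inv_le_comm₀ ht0 (by norm_num)]
      linarith
    rw [hfA_def]
    simp only [hftil_def, h1, min_eq_right h2]
    field_simp
  have hgA_eq : gA = fun t : ℝ => t * gtil t := by
    funext t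
    rcases le_or_gt t (2 / 3) with h | h
    · have h1 : max (t - 2 / 3) 0 = 0 := max_eq_right (by linarith)
      simp only [hgA_def, hgtil_def, h1, zero_mul, mul_zero]
    · have ht0 : (0 : ℝ) < t := by linarith
      have h1 : max t (2 / 3) = t := max_eq_left (by linarith)
      simp only [hgA_def, hgtil_def, h1]
      field_simp
  set c := cfc fA z' with hc_def
  set y' := cfc gA z' with hy'_def
  have hy'_sa : IsSelfAdjoint y' := cfc_predicate _ z'
  -- factored forms
  have hc_fact : c = z' * cfc ftil z' := by
    have h := cfc_mul (fun t : ℝ => t) ftil z' continuous_id.continuousOn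
      hftil_cont.continuousOn
    rw [cfc_id' ℝ z'] at h
    exact h
  have hy'_fact : y' = z' * cfc gtil z' := by
    have h := cfc_mul (fun t : ℝ => t) gtil z' continuous_id.continuousOn
      hgtil_cont.continuousOn
    rw [cfc_id' ℝ z'] at h
    rw [hy'_def, hgA_eq]
    exact h
  -- ### `ρ y' ≠ 0`
  have hρy' : ρ y' ≠ 0 := by
    obtain ⟨sq, hsq⟩ := cfc_max_sub_decomp z' hz'_sa (2 / 3)
    have hy'_op : ρ y' = (ρ z' - (2 / 3 : ℝ) • 1) + star (ρ sq) * ρ sq := by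
      rw [hy'_def, hgA_def, hsq]
      simp only [map_add, map_sub, map_mul, map_star, map_rsmul, map_one]
    have hρz'_eq : ρ z' = star (ρ sν) * ρ sν := by
      rw [← hsν_eq, map_mul, map_star]
    have hnz' : ‖ρ z'‖ = 1 := by
      rw [hz', map_rsmul, norm_smul, Real.norm_eq_abs, abs_of_nonneg (by positivity), ← hν]
      field_simp
    have hSop : ‖ρ sν‖ = 1 := by
      have h1 : ‖star (ρ sν) * ρ sν‖ = ‖ρ sν‖ * ‖ρ sν‖ := CStarRing.norm_star_mul_self
      rw [← hρz'_eq, hnz'] at h1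
      nlinarith [norm_nonneg (ρ sν)]
    obtain ⟨η, hη1, hη2⟩ := exists_unit_vec (ρ sν) hSop (ε := 1 / 10) (by norm_num) (by norm_num)
    intro h0
    have h1 : @inner ℂ _ _ (ρ y' η) η = 0 := by rw [h0]; simp
    rw [hy'_op] at h1
    have expand : @inner ℂ _ _ ((((ρ z' - (2 / 3 : ℝ) • 1) + star (ρ sq) * ρ sq)) η) η
        = ((‖ρ sν η‖ ^ 2 : ℝ) : ℂ) - ((2 / 3 : ℝ) : ℂ) * ((‖η‖ ^ 2 : ℝ) : ℂ)
          + ((‖ρ sq η‖ ^ 2 : ℝ) : ℂ) := by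
      rw [ContinuousLinearMap.add_apply, ContinuousLinearMap.sub_apply,
        ContinuousLinearMap.smul_apply, ContinuousLinearMap.one_apply,
        inner_add_left, inner_sub_left, hρz'_eq, inner_star_apply_self,
        inner_star_apply_self]
      congr 1
      congr 1
      have : (2 / 3 : ℝ) • η = ((2 / 3 : ℝ) : ℂ) • η := by
        rw [← algebraMap_smul ℂ (2 / 3 : ℝ) η]; norm_num
      rw [this, inner_smul_left, inner_self_eq_norm_sq_to_K, Complex.conj_ofReal]
      norm_cast
      exact (Complex.ofReal_mul _ _).symm
    rw [expand] at h1
    have h2 : (‖ρ sν η‖ ^ 2 : ℝ) - (2 / 3 : ℝ) * (‖η‖ ^ 2 : ℝ) + (‖ρ sq η‖ ^ 2 : ℝ) = 0 := by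
      exact_mod_cast h1
    rw [hη1] at h2
    nlinarith [sq_nonneg (‖ρ sq η‖), hη2, norm_nonneg (ρ sq η)]
  -- ### remaining properties
  refine ⟨c, y', hy'_sa, hρy', ?_, ?_, ?_, ?_, ?_⟩
  · -- ‖c‖ ≤ 1
    rw [hc_def]
    refine norm_cfc_le (by norm_num) fun t ht => ?_
    have ht0 : 0 ≤ t := hspec t ht
    rcases le_or_gt t (2 / 3) with h | h
    · have h1 : max t (2 / 3) = 2 / 3 := max_eq_right (by linarith)
      have h2 : ((2 : ℝ) / 3)⁻¹ = 3 / 2 := by norm_num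
      simp only [hfA_def, hftil_def, h1, h2, min_self]
      rw [Real.norm_eq_abs, abs_of_nonneg (by positivity)]
      nlinarith
    · rw [hfA_one t h]; norm_num
  · -- c * y' = y'
    rw [hc_def, hy'_def, ← cfc_mul fA gA z' hfA_cont.continuousOn hgA_cont.continuousOn]
    apply cfc_congr
    intro t _
    show fA t * gA t = gA t
    rcases le_or_gt t (2 / 3) with h | h
    · have h1 : gA t = 0 := max_eq_right (by linarith)
      rw [h1, mul_zero]
    · rw [hfA_one t h, one_mul]
  · -- previous-fix propagation
    intro u hu
    have huz : u * z' = z' := by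
      have h1 : u * z = z := by
        rw [hz, hstar_e]
        calc u * (y * d * e) = u * y * d * e := by simp only [mul_assoc]
        _ = y * d * e := by rw [hu]
      rw [hz', mul_smul_comm, h1]
    constructor
    · rw [hc_fact, ← mul_assoc, huz]
    · rw [hy'_fact, ← mul_assoc, huz]
  · -- vanishing from w
    intro i hiw
    have hd0 : F i d = 0 := by
      obtain ⟨x, v, rfl⟩ := hdw
      rw [map_mul, map_mul, hiw, mul_zero, zero_mul]
    have he0 : F i e = 0 := by rw [he, map_mul, map_star, hd0, star_zero, zero_mul]
    have hz0 : F i z' = 0 := by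
      rw [hz', map_rsmul, hz, map_mul, he0, mul_zero, smul_zero]
    exact ⟨by rw [hc_fact, map_mul, hz0, zero_mul],
      by rw [hy'_fact, map_mul, hz0, zero_mul]⟩
  · -- vanishing from y
    intro i hiy
    have he0 : F i e = 0 := by rw [he, map_mul, hiy, mul_zero]
    have hz0 : F i z' = 0 := by
      rw [hz', map_rsmul, hz, map_mul, he0, mul_zero, smul_zero]
    exact ⟨by rw [hc_fact, map_mul, hz0, zero_mul],
      by rw [hy'_fact, map_mul, hz0, zero_mul]⟩

end Step

/-! ### Countable family of generators -/

section Gens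

variable {A : Type*} [CStarAlgebra A] {H : Type} [NormedAddCommGroup H]
  [InnerProductSpace ℂ H] [CompleteSpace H] {ι : Type*} {Hf : ι → Type}
  [∀ i, NormedAddCommGroup (Hf i)] [∀ i, InnerProductSpace ℂ (Hf i)]
  [∀ i, CompleteSpace (Hf i)]

lemma gens_exist [TopologicalSpace.SeparableSpace A]
    (F : ∀ i, A →⋆ₐ[ℂ] (Hf i →L[ℂ] Hf i)) (ρ : A →⋆ₐ[ℂ] (H →L[ℂ] H)) :
    ∃ g : ℕ → A, ∀ i, (∃ a, F i a = 0 ∧ ρ a ≠ 0) → ∃ n, F i (g n) = 0 ∧ ρ (g n) ≠ 0 := by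
  classical
  haveI : Nonempty A := ⟨1⟩
  set u : ℕ → A := TopologicalSpace.denseSeq A with hu
  have hdense : DenseRange u := TopologicalSpace.denseRange_denseSeq A
  set hA : ℝ → ℝ := fun t => max (t - 4⁻¹) 0 with hA_def
  have hA_cont : Continuous hA := (continuous_id.sub continuous_const).max continuous_const
  set x : ℕ → A := fun m => (2⁻¹ : ℝ) • (u m + star (u m)) with hx_def
  have hx_sa : ∀ m, IsSelfAdjoint (x m) := by
    intro m
    have h1 : IsSelfAdjoint (u m + star (u m)) := by
      simp [IsSelfAdjoint, star_add, star_star, add_comm]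
    exact IsSelfAdjoint.smul (star_trivial _) h1
  refine ⟨fun m => cfc hA (x m), ?_⟩
  rintro i ⟨a, ha0, haρ⟩
  set p := star a * a with hp
  have hρp : ρ p ≠ 0 := by
    rw [hp, map_mul, map_star]
    intro h
    exact haρ ((CStarRing.star_mul_self_eq_zero_iff _).mp h)
  set ν := ‖ρ p‖ with hν
  have hν0 : (0 : ℝ) < ν := norm_pos_iff.mpr hρp
  set a' := ν⁻¹ • p with ha'
  have ha'_sa : IsSelfAdjoint a' :=
    IsSelfAdjoint.smul (star_trivial _) (IsSelfAdjoint.star_mul_self a)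
  have hFa' : F i a' = 0 := by
    rw [ha', map_rsmul, hp, map_mul, map_star, ha0, star_zero, zero_mul, smul_zero]
  set s' := (Real.sqrt ν)⁻¹ • a with hs'
  have hs'_eq : star s' * s' = a' := by
    rw [hs', sqrt_smul_star_mul_self hν0.le, ha', hp]
  have hρa'_eq : ρ a' = star (ρ s') * ρ s' := by rw [← hs'_eq, map_mul, map_star]
  have hna' : ‖ρ a'‖ = 1 := by
    rw [ha', map_rsmul, norm_smul, Real.norm_eq_abs, abs_of_nonneg (by positivity), ← hν]
    field_simp
  have hS : ‖ρ s'‖ = 1 := by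
    have h1 : ‖star (ρ s') * ρ s'‖ = ‖ρ s'‖ * ‖ρ s'‖ := CStarRing.norm_star_mul_self
    rw [← hρa'_eq, hna'] at h1
    nlinarith [norm_nonneg (ρ s')]
  obtain ⟨η, hη1, hη2⟩ := exists_unit_vec (ρ s') hS (ε := 1 / 10) (by norm_num) (by norm_num)
  obtain ⟨m, hm⟩ := Metric.denseRange_iff.mp hdense a' (16⁻¹ : ℝ) (by norm_num)
  have hum : ‖u m - a'‖ < 16⁻¹ := by
    rw [← dist_eq_norm, dist_comm]
    exact hm
  have hxm_close : ‖x m - a'‖ < 16⁻¹ := by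
    have hdecomp : x m - a' = (2⁻¹ : ℝ) • ((u m - a') + star (u m - a')) := by
      rw [hx_def, star_sub, ha'_sa.star_eq]
      module
    rw [hdecomp, norm_smul, Real.norm_eq_abs, abs_of_nonneg (by norm_num)]
    have h2 : ‖(u m - a') + star (u m - a')‖ ≤ ‖u m - a'‖ + ‖star (u m - a')‖ :=
      norm_add_le _ _
    rw [norm_star] at h2
    nlinarith [hum]
  refine ⟨m, ?_, ?_⟩
  · -- vanishing
    rcases subsingleton_or_nontrivial (Hf i) with hsub | hnt
    · exact Subsingleton.elim _ _
    · have hcontF : Continuous (F i) := psi_cont (F i)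
      have hxm_sa' : IsSelfAdjoint (F i (x m)) := (hx_sa m).map (F i)
      have h1 : F i (cfc hA (x m)) = cfc hA (F i (x m)) :=
        StarAlgHomClass.map_cfc (F i) hA (x m) hA_cont.continuousOn hcontF (hx_sa m) hxm_sa'
      rw [h1]
      have hFn : ‖F i (x m)‖ < 16⁻¹ := by
        have h2 : F i (x m) = F i (x m - a') := by rw [map_sub, hFa', sub_zero]
        rw [h2]
        exact lt_of_le_of_lt (NonUnitalStarAlgHom.norm_apply_le (F i) _) hxm_close
      have h3 : ∀ t ∈ spectrum ℝ (F i (x m)), hA t = 0 := by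
        intro t ht
        have h4 := spectrum.norm_le_norm_of_mem ht
        rw [Real.norm_eq_abs] at h4
        have h5 : |t| < 16⁻¹ := lt_of_le_of_lt h4 hFn
        have h6 := (abs_lt.mp h5).2
        rw [hA_def]
        apply max_eq_right
        norm_num at h6 ⊢
        linarith
      calc cfc hA (F i (x m)) = cfc (fun _ : ℝ => (0 : ℝ)) (F i (x m)) := cfc_congr h3
        _ = 0 := by simp
  · -- nonvanishing at ρ
    obtain ⟨sq, hsq⟩ := cfc_max_sub_decomp (x m) (hx_sa m) 4⁻¹
    intro h0
    have h1 : @inner ℂ _ _ (ρ (cfc hA (x m)) η) η = 0 := by rw [h0]; simp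
    have hrw : ρ (cfc hA (x m))
        = (ρ (x m) - (4⁻¹ : ℝ) • 1) + star (ρ sq) * ρ sq := by
      rw [hA_def, hsq]
      simp only [map_add, map_sub, map_mul, map_star, map_rsmul, map_one]
    rw [hrw] at h1
    -- expand the inner product
    have expand : @inner ℂ _ _ (((ρ (x m) - (4⁻¹ : ℝ) • 1) + star (ρ sq) * ρ sq) η) η
        = @inner ℂ _ _ (ρ (x m) η) η - (((4⁻¹ : ℝ) : ℂ) * ((‖η‖ ^ 2 : ℝ) : ℂ))
          + ((‖ρ sq η‖ ^ 2 : ℝ) : ℂ) := by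
      rw [ContinuousLinearMap.add_apply, ContinuousLinearMap.sub_apply,
        ContinuousLinearMap.smul_apply, ContinuousLinearMap.one_apply,
        inner_add_left, inner_sub_left, inner_star_apply_self]
      congr 1
      congr 1
      have hcast : (4⁻¹ : ℝ) • η = ((4⁻¹ : ℝ) : ℂ) • η := by
        rw [← algebraMap_smul ℂ (4⁻¹ : ℝ) η]; norm_num
      rw [hcast, inner_smul_left, inner_self_eq_norm_sq_to_K, Complex.conj_ofReal]
      norm_cast
      exact (Complex.ofReal_mul _ _).symm
    rw [expand] at h1
    -- inner with x m: compare with a'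
    have hsplit : @inner ℂ _ _ (ρ (x m) η) η
        = @inner ℂ _ _ (ρ a' η) η + @inner ℂ _ _ (ρ (x m - a') η) η := by
      have hceq : x m = a' + (x m - a') := by abel
      rw [← inner_add_left, ← ContinuousLinearMap.add_apply, ← map_add, ← hceq]
    have herr : ‖ρ (x m - a') η‖ ≤ ‖x m - a'‖ := by
      calc ‖ρ (x m - a') η‖ ≤ ‖ρ (x m - a')‖ * ‖η‖ := ContinuousLinearMap.le_opNorm _ _
        _ = ‖ρ (x m - a')‖ := by rw [hη1, mul_one]
        _ ≤ ‖x m - a'‖ := NonUnitalStarAlgHom.norm_apply_le ρ _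
    have herr2 : |(@inner ℂ _ _ (ρ (x m - a') η) η).re| ≤ ‖x m - a'‖ := by
      have h5 : ‖@inner ℂ _ _ (ρ (x m - a') η) η‖ ≤ ‖ρ (x m - a') η‖ * ‖η‖ :=
        norm_inner_le_norm _ _
      rw [hη1, mul_one] at h5
      exact le_trans (Complex.abs_re_le_norm _) (le_trans h5 herr)
    have hmain : (@inner ℂ _ _ (ρ a' η) η).re = ‖ρ s' η‖ ^ 2 := by
      rw [hρa'_eq, inner_star_apply_self]
      norm_cast
    -- take real parts of h1
    have h6 := congrArg Complex.re h1
    simp only [Complex.add_re, Complex.sub_re, Complex.mul_re, Complex.ofReal_re,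
      Complex.ofReal_im, Complex.zero_re] at h6
    rw [hsplit] at h6
    simp only [Complex.add_re] at h6
    rw [hmain, hη1] at h6
    have h7 := (abs_le.mp herr2).1
    nlinarith [hη2, sq_nonneg (‖ρ sq η‖), norm_nonneg (ρ sq η), hxm_close]

end Gens

/-! ### The key theorem -/

section Key

variable {A : Type*} [CStarAlgebra A] {H : Type} [NormedAddCommGroup H]
  [InnerProductSpace ℂ H] [CompleteSpace H] {ι : Type*} {Hf : ι → Type}
  [∀ i, NormedAddCommGroup (Hf i)] [∀ i, InnerProductSpace ℂ (Hf i)]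
  [∀ i, CompleteSpace (Hf i)]

lemma geom_partial (n : ℕ) :
    ∑ m ∈ Finset.range n, ((2 : ℝ)⁻¹) ^ (m + 1) = 1 - (2⁻¹) ^ n := by
  induction n with
  | zero => simp
  | succ n ih => rw [Finset.sum_range_succ, ih]; ring

theorem key [TopologicalSpace.SeparableSpace A]
    (F : ∀ i, A →⋆ₐ[ℂ] (Hf i →L[ℂ] Hf i))
    (hF : ∀ a : A, IsUnit a ↔ ∀ i, IsUnit (F i a))
    (ρ : A →⋆ₐ[ℂ] (H →L[ℂ] H)) (hnt : Nontrivial H)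
    (hirr : ∀ K : Submodule ℂ H, IsClosed (K : Set H) →
      (∀ a : A, ∀ ξ ∈ K, ρ a ξ ∈ K) → K = ⊥ ∨ K = ⊤) :
    ∃ i, ∀ a : A, F i a = 0 → ρ a = 0 := by
  classical
  by_contra hcon
  push_neg at hcon
  obtain ⟨g, hg⟩ := gens_exist F ρ
  have hcover : ∀ i, ∃ n, F i (g n) = 0 ∧ ρ (g n) ≠ 0 := fun i => hg i (hcon i)
  haveI : Nontrivial (H →L[ℂ] H) := by
    obtain ⟨x, hx⟩ := exists_ne (0 : H)
    exact ⟨1, 0, fun h => hx (by simpa using ContinuousLinearMap.ext_iff.mp h x)⟩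
  set w : ℕ → A := fun n => if ρ (g n) ≠ 0 then g n else 1 with hw_def
  have hρw : ∀ n, ρ (w n) ≠ 0 := by
    intro n
    by_cases h : ρ (g n) ≠ 0
    · simp only [hw_def, if_pos h]; exact h
    · simp only [hw_def, if_neg h, map_one]; exact one_ne_zero
  have hcov' : ∀ i, ∃ n, F i (w n) = 0 := by
    intro i
    obtain ⟨n, h1, h2⟩ := hcover i
    exact ⟨n, by simp only [hw_def, if_pos h2]; exact h1⟩
  choose cs ys hsa hρy hnorm hfixown hfixprev hvw hvy using
    fun (yp : A) (h1 : IsSelfAdjoint yp) (h2 : ρ yp ≠ 0) (n : ℕ) =>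
      step_exists F ρ hirr yp h1 h2 (w n) (hρw n)
  have hone : IsSelfAdjoint (1 : A) := IsSelfAdjoint.one A
  have hρ1 : ρ (1 : A) ≠ 0 := by rw [map_one]; exact one_ne_zero
  let Y : ℕ → {q : A // IsSelfAdjoint q ∧ ρ q ≠ 0} := fun n =>
    Nat.rec ⟨1, hone, hρ1⟩
      (fun m prev => ⟨ys prev.1 prev.2.1 prev.2.2 m,
        hsa prev.1 prev.2.1 prev.2.2 m, hρy prev.1 prev.2.1 prev.2.2 m⟩) n
  set c : ℕ → A := fun m => cs (Y m).1 (Y m).2.1 (Y m).2.2 m with hc_def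
  set y : ℕ → A := fun m => (Y (m + 1)).1 with hy_def
  have hYs : ∀ m, y m = ys (Y m).1 (Y m).2.1 (Y m).2.2 m := fun m => rfl
  have hnormc : ∀ m, ‖c m‖ ≤ 1 := fun m => hnorm _ _ _ m
  have hρyk : ∀ m, ρ (y m) ≠ 0 := fun m => (Y (m + 1)).2.2
  have hfix : ∀ n k, n ≤ k → c n * y k = y k := by
    intro n k hnk
    induction k, hnk using Nat.le_induction with
    | base => rw [hYs n]; exact hfixown _ _ _ n
    | succ k hk ih =>
        have h1 : c n * (Y (k + 1)).1 = (Y (k + 1)).1 := ih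
        have h2 := (hfixprev (Y (k + 1)).1 (Y (k + 1)).2.1 (Y (k + 1)).2.2 (k + 1) (c n) h1).2
        rw [hYs (k + 1)]
        exact h2
  have hvanish : ∀ i n, F i (w n) = 0 → ∀ k, n ≤ k → F i (c k) = 0 := by
    intro i n h0
    have hyk : ∀ k, n ≤ k → F i (c k) = 0 ∧ F i (y k) = 0 := by
      intro k hk
      induction k, hk using Nat.le_induction with
      | base =>
          have h := hvw (Y n).1 (Y n).2.1 (Y n).2.2 n i h0
          exact ⟨h.1, by rw [hYs n]; exact h.2⟩
      | succ k hk ih =>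
          have h := hvy (Y (k + 1)).1 (Y (k + 1)).2.1 (Y (k + 1)).2.2 (k + 1) i ih.2
          exact ⟨h.1, by rw [hYs (k + 1)]; exact h.2⟩
    exact fun k hk => (hyk k hk).1
  -- the element b
  set wgt : ℕ → ℝ := fun m => (2⁻¹ : ℝ) ^ (m + 1) with hwgt_def
  have hwgt_pos : ∀ m, 0 < wgt m := fun m => by positivity
  have hwgt_sum : Summable wgt := by
    have h := summable_geometric_two.mul_left (2⁻¹ : ℝ)
    have hfun : wgt = fun n : ℕ => 2⁻¹ * (1 / 2) ^ n := by
      funext n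
      simp only [hwgt_def, pow_succ, one_div]
      ring
    rw [hfun]
    exact h
  have hsummable : Summable (fun m => wgt m • c m) := by
    apply Summable.of_norm_bounded hwgt_sum
    intro m
    rw [norm_smul, Real.norm_eq_abs, abs_of_nonneg (hwgt_pos m).le]
    calc wgt m * ‖c m‖ ≤ wgt m * 1 :=
          mul_le_mul_of_nonneg_left (hnormc m) (hwgt_pos m).le
      _ = wgt m := mul_one _
  set b := ∑' m, wgt m • c m with hb_def
  have hwsum : HasSum wgt 1 := by
    have h := hasSum_geometric_two' 1
    have hfun : wgt = fun n : ℕ => 1 / 2 / 2 ^ n := by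
      funext n
      simp only [hwgt_def, pow_succ, one_div, div_eq_mul_inv, inv_pow]
      ring
    rw [hfun]
    exact h
  -- Part A : each F i (1 - b) is a unit
  have hAunit : ∀ i, IsUnit (F i (1 - b)) := by
    intro i
    obtain ⟨n, hn⟩ := hcov' i
    have h0 := hvanish i n hn
    set hd := ∑ m ∈ Finset.range n, wgt m • c m with hhd_def
    have hFib : F i b = F i hd := by
      have h1 : HasSum (fun m => F i (wgt m • c m)) (F i b) := by
        have := hsummable.hasSum.map (F i) (psi_cont (F i))
        simpa [Function.comp_def] using this
      have h2 : ∀ m ∉ Finset.range n, F i (wgt m • c m) = 0 := by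
        intro m hm
        rw [map_rsmul, h0 m (by simpa using hm), smul_zero]
      rw [hb_def, ← h1.tsum_eq, tsum_eq_sum h2, hhd_def, map_sum]
    have hhd_norm : ‖hd‖ < 1 := by
      have hb1 : ‖hd‖ ≤ ∑ m ∈ Finset.range n, wgt m := by
        refine le_trans (norm_sum_le _ _) (Finset.sum_le_sum fun m _ => ?_)
        rw [norm_smul, Real.norm_eq_abs, abs_of_nonneg (hwgt_pos m).le]
        calc wgt m * ‖c m‖ ≤ wgt m * 1 :=
              mul_le_mul_of_nonneg_left (hnormc m) (hwgt_pos m).le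
          _ = wgt m := mul_one _
      have hb2 : ∑ m ∈ Finset.range n, wgt m = 1 - (2⁻¹ : ℝ) ^ n := geom_partial n
      have hb3 : (0 : ℝ) < (2⁻¹ : ℝ) ^ n := by positivity
      linarith [hb1, hb2 ▸ hb1]
    have hrw : F i (1 - b) = F i (1 - hd) := by rw [map_sub, map_sub, hFib]
    rw [hrw]
    exact ((Units.oneSub hd hhd_norm).isUnit).map (F i)
  have hbunit : IsUnit (1 - b) := (hF _).mpr hAunit
  obtain ⟨v, hv⟩ := hbunit
  set M := ‖ρ ((↑v⁻¹ : A))‖ with hM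
  have hM0 : 0 ≤ M := norm_nonneg _
  obtain ⟨k, hk⟩ := exists_pow_lt_of_lt_one (x := (M + 1)⁻¹) (y := (2⁻¹ : ℝ))
    (by positivity) (by norm_num)
  obtain ⟨ζ, hζ⟩ : ∃ ζ, ρ (y k) ζ ≠ 0 := by
    by_contra h; push_neg at h; exact hρyk k (ContinuousLinearMap.ext h)
  set ξ := (‖ρ (y k) ζ‖⁻¹ : ℝ) • (ρ (y k) ζ) with hξ_def
  have hξ1 : ‖ξ‖ = 1 := by
    rw [hξ_def, norm_smul, Real.norm_eq_abs, abs_of_nonneg (by positivity)]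
    have hpos : (0 : ℝ) < ‖ρ (y k) ζ‖ := norm_pos_iff.mpr hζ
    field_simp
  have hfixξ : ∀ m, m ≤ k → ρ (c m) ξ = ξ := by
    intro m hm
    rw [hξ_def, ContinuousLinearMap.map_smul_of_tower]
    congr 1
    rw [← ContinuousLinearMap.mul_apply, ← map_mul, hfix m k hm]
  have h1 : HasSum (fun m => ρ (wgt m • c m)) (ρ b) := by
    have := hsummable.hasSum.map ρ (psi_cont ρ)
    simpa [Function.comp_def] using this
  have h2 : HasSum (fun m => ρ (wgt m • c m) ξ) (ρ b ξ) := by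
    have := h1.map (ContinuousLinearMap.apply ℂ H ξ)
      (ContinuousLinearMap.apply ℂ H ξ).continuous
    simpa [Function.comp_def] using this
  have h2' : HasSum (fun m => wgt m • (ρ (c m) ξ)) (ρ b ξ) := by
    have hterm : (fun m => ρ (wgt m • c m) ξ) = fun m => wgt m • (ρ (c m) ξ) := by
      funext m
      rw [map_rsmul, ContinuousLinearMap.smul_apply]
    rw [← hterm]
    exact h2
  have h3 : HasSum (fun m => wgt m • ξ) ξ := by simpa using hwsum.smul_const ξ
  have h4 : HasSum (fun m => wgt m • ξ - wgt m • (ρ (c m) ξ)) (ξ - ρ b ξ) := h3.sub h2'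
  set β : ℕ → ℝ := fun m => if m ≤ k then 0 else 2 * wgt m with hβ_def
  have hterm : ∀ m, ‖wgt m • ξ - wgt m • (ρ (c m) ξ)‖ ≤ β m := by
    intro m
    by_cases hm : m ≤ k
    · simp only [hβ_def, if_pos hm]
      rw [hfixξ m hm, sub_self, norm_zero]
    · simp only [hβ_def, if_neg hm]
      have hcm : ‖ρ (c m) ξ‖ ≤ 1 := by
        calc ‖ρ (c m) ξ‖ ≤ ‖ρ (c m)‖ * ‖ξ‖ := ContinuousLinearMap.le_opNorm _ _
          _ = ‖ρ (c m)‖ := by rw [hξ1, mul_one]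
          _ ≤ ‖c m‖ := NonUnitalStarAlgHom.norm_apply_le ρ _
          _ ≤ 1 := hnormc m
      calc ‖wgt m • ξ - wgt m • (ρ (c m) ξ)‖
          ≤ ‖wgt m • ξ‖ + ‖wgt m • (ρ (c m) ξ)‖ := norm_sub_le _ _
        _ ≤ wgt m * 1 + wgt m * 1 := by
            apply add_le_add
            · rw [norm_smul, Real.norm_eq_abs, abs_of_nonneg (hwgt_pos m).le, hξ1]
            · rw [norm_smul, Real.norm_eq_abs, abs_of_nonneg (hwgt_pos m).le]
              exact mul_le_mul_of_nonneg_left hcm (hwgt_pos m).le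
        _ = 2 * wgt m := by ring
  have hβsum : HasSum β ((2⁻¹ : ℝ) ^ k) := by
    have hC : HasSum (fun j : ℕ => (2 * (2⁻¹ : ℝ) ^ (k + 2)) * (2⁻¹) ^ j)
        ((2 * (2⁻¹ : ℝ) ^ (k + 2)) * 2) := by
      have hg := hasSum_geometric_of_lt_one (by norm_num : (0 : ℝ) ≤ 2⁻¹)
        (by norm_num : (2⁻¹ : ℝ) < 1)
      have h2 : ((1 : ℝ) - 2⁻¹)⁻¹ = 2 := by norm_num
      rw [h2] at hg
      exact hg.mul_left _
    have hfun : (fun j : ℕ => β (j + (k + 1)))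
        = fun j => (2 * (2⁻¹ : ℝ) ^ (k + 2)) * (2⁻¹) ^ j := by
      funext j
      simp only [hβ_def, hwgt_def, if_neg (by omega : ¬(j + (k + 1) ≤ k))]
      ring
    have hval : (2 * (2⁻¹ : ℝ) ^ (k + 2)) * 2 = (2⁻¹ : ℝ) ^ k := by
      rw [pow_add]
      norm_num
      ring
    have hshift : HasSum (fun j => β (j + (k + 1))) ((2⁻¹ : ℝ) ^ k) := by
      rw [hfun, ← hval]
      exact hC
    have hfull := (hasSum_nat_add_iff (k + 1)).mp hshift
    have hzero : ∑ i ∈ Finset.range (k + 1), β i = 0 := by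
      apply Finset.sum_eq_zero
      intro i hi
      have hik := Finset.mem_range.mp hi
      simp only [hβ_def, if_pos (by omega : i ≤ k)]
    rw [hzero, add_zero] at hfull
    exact hfull
  have hbound : ‖ξ - ρ b ξ‖ ≤ (2⁻¹ : ℝ) ^ k := by
    have hsum_norm : Summable (fun m => ‖wgt m • ξ - wgt m • (ρ (c m) ξ)‖) :=
      Summable.of_nonneg_of_le (fun m => norm_nonneg _) hterm hβsum.summable
    calc ‖ξ - ρ b ξ‖ = ‖∑' m, (wgt m • ξ - wgt m • (ρ (c m) ξ))‖ := by rw [h4.tsum_eq]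
      _ ≤ ∑' m, ‖wgt m • ξ - wgt m • (ρ (c m) ξ)‖ := norm_tsum_le_tsum_norm hsum_norm
      _ ≤ ∑' m, β m := Summable.tsum_le_tsum hterm hsum_norm hβsum.summable
      _ = (2⁻¹ : ℝ) ^ k := hβsum.tsum_eq
  have hvb : (↑v⁻¹ : A) * (1 - b) = 1 := by rw [← hv]; exact Units.inv_mul v
  have hξeq : ρ ((↑v⁻¹ : A)) (ρ (1 - b) ξ) = ξ := by
    rw [← ContinuousLinearMap.mul_apply, ← map_mul, hvb, map_one,
      ContinuousLinearMap.one_apply]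
  have h1b : ρ (1 - b) ξ = ξ - ρ b ξ := by
    rw [map_sub, map_one, ContinuousLinearMap.sub_apply, ContinuousLinearMap.one_apply]
  have hfinal : (1 : ℝ) ≤ M * (2⁻¹ : ℝ) ^ k := by
    calc (1 : ℝ) = ‖ξ‖ := hξ1.symm
      _ = ‖ρ ((↑v⁻¹ : A)) (ρ (1 - b) ξ)‖ := by rw [hξeq]
      _ ≤ M * ‖ρ (1 - b) ξ‖ := ContinuousLinearMap.le_opNorm _ _
      _ ≤ M * (2⁻¹ : ℝ) ^ k := by
          refine mul_le_mul_of_nonneg_left ?_ hM0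
          rw [h1b]
          exact hbound
  have hlast : M * (2⁻¹ : ℝ) ^ k < 1 := by
    calc M * (2⁻¹ : ℝ) ^ k ≤ (M + 1) * (2⁻¹ : ℝ) ^ k := by
          apply mul_le_mul_of_nonneg_right (by linarith) (by positivity)
      _ < (M + 1) * (M + 1)⁻¹ := by
          apply mul_lt_mul_of_pos_left hk (by linarith)
      _ = 1 := by field_simp
  linarith

end Key

end SSIE


variable {A : Type*} [NormedRing A] [StarRing A] [CStarRing A] [NormedAlgebra ℂ A]
  [CompleteSpace A] [StarModule ℂ A]

/-- A (topologically) irreducible representation of a unital C*-algebra on a Hilbert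
space: the space is nonzero and the only closed invariant subspaces are `⊥` and `⊤`. -/
def IsIrreducibleRep {H : Type} [NormedAddCommGroup H] [InnerProductSpace ℂ H]
    [CompleteSpace H] (ρ : A →⋆ₐ[ℂ] (H →L[ℂ] H)) : Prop :=
  Nontrivial H ∧
    ∀ K : Submodule ℂ H, IsClosed (K : Set H) → (∀ (a : A), ∀ ξ ∈ K, ρ a ξ ∈ K) →
      K = ⊥ ∨ K = ⊤

/-- A family `F` of representations of `A` is exhaustive if every primitive ideal
contains the kernel of some member of `F`; i.e. for every irreducible representation
`ρ` there is `i` with `ker (F i) ⊆ ker ρ` (so `ρ` is weakly contained in `F i`). -/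
def IsExhaustive {ι : Type*} (Hf : ι → Type) [∀ i, NormedAddCommGroup (Hf i)]
    [∀ i, InnerProductSpace ℂ (Hf i)] [∀ i, CompleteSpace (Hf i)]
    (F : ∀ i, A →⋆ₐ[ℂ] (Hf i →L[ℂ] Hf i)) : Prop :=
  ∀ (H : Type) [NormedAddCommGroup H] [InnerProductSpace ℂ H] [CompleteSpace H]
    (ρ : A →⋆ₐ[ℂ] (H →L[ℂ] H)), IsIrreducibleRep ρ →
      ∃ i, ∀ a : A, F i a = 0 → ρ a = 0


/-- if `A` is a separable unital C*-algebra and `F` is a strictly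
spectral family of representations of `A` (invertibility in `A` is detected by `F`),
then `F` is exhaustive. -/
theorem strictlySpectral_implies_exhaustive [TopologicalSpace.SeparableSpace A]
    {ι : Type*} (Hf : ι → Type)
    [∀ i, NormedAddCommGroup (Hf i)] [∀ i, InnerProductSpace ℂ (Hf i)]
    [∀ i, CompleteSpace (Hf i)] (F : ∀ i, A →⋆ₐ[ℂ] (Hf i →L[ℂ] Hf i))
    (hF : ∀ a : A, IsUnit a ↔ ∀ i, IsUnit (F i a)) :
    IsExhaustive Hf F := by
  intro H _inst1 _inst2 _inst3 ρ hρ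
  letI : CStarAlgebra A :=
    { ‹NormedRing A›, ‹StarRing A›, ‹CStarRing A›, ‹NormedAlgebra ℂ A›,
      ‹CompleteSpace A›, ‹StarModule ℂ A› with }
  obtain ⟨hnt, hirr⟩ := hρ
  exact SSIE.key F hF ρ hnt hirr
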